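/- Let (𝒱, ℰ) be a quantum hypergraph with E ≤ η𝟙 and Tr E = q for all E ∈ ℰ, where q ≤ 1, let P be a probability distribution on ℰ, ρ = ∑_{E∈ℰ} P(E)·E, and fix ε, τ > 0. Then there exist E₁, …, E_L ∈ ℰ with L ≤ 1 + η·(dim 𝒱)·(2 ln 2 · log(2 dim 𝒱))/(ε²τ) such that ρ̄ = (1/L)∑_{i=1}^{L} E_i satisfies ‖ρ − ρ̄‖₁ ≤ (ε + τ) + √(8(ε + τ)). -/

import Mathlib

open scoped BigOperators
open ComplexOrder
open scoped Matrix

def IsProbDist {α : Type*} [Fintype α] (P : α → ℝ) : Prop :=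
  (∀ a, 0 ≤ P a) ∧ ∑ a, P a = 1

/-- The positive semidefinite square root (as in the older Mathlib, where it has since been removed). -/
noncomputable def Matrix.PosSemidef.sqrt {n 𝕜 : Type*} [Fintype n] [RCLike 𝕜] [DecidableEq n]
    {A : Matrix n n 𝕜} (hA : A.PosSemidef) : Matrix n n 𝕜 :=
  (hA.isHermitian.eigenvectorUnitary : Matrix n n 𝕜) *
    Matrix.diagonal ((↑) ∘ (√·) ∘ hA.isHermitian.eigenvalues) *
    (star hA.isHermitian.eigenvectorUnitary : Matrix n n 𝕜)

/-- Trace norm ‖A‖₁ = Tr √(AᴴA). -/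
noncomputable def traceNorm {m : Type*} [Fintype m] [DecidableEq m]
    (A : Matrix m m ℂ) : ℝ :=
  (Matrix.posSemidef_conjTranspose_mul_self A).sqrt.trace.re

open scoped MatrixOrder in
lemma Matrix.PosSemidef.sqrt_eq_cfcSqrt {n : Type*} [Fintype n] [DecidableEq n]
    {A : Matrix n n ℂ} (hA : A.PosSemidef) : hA.sqrt = CFC.sqrt A := by
  have hA0 : (0 : Matrix n n ℂ) ≤ A := hA.nonneg
  rw [CFC.sqrt_eq_cfc, cfc_nnreal_eq_real _ A, hA.1.cfc_eq]
  simp only [Matrix.IsHermitian.cfc, Matrix.PosSemidef.sqrt, Unitary.conjStarAlgAut_apply,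
    Unitary.coe_star]
  congr 3
  funext i
  simp [Real.coe_sqrt, Real.coe_toNNReal', max_eq_left (hA.eigenvalues_nonneg i)]

open scoped MatrixOrder in
lemma Matrix.PosSemidef.sqrt_mul_self {n : Type*} [Fintype n] [DecidableEq n]
    {A : Matrix n n ℂ} (hA : A.PosSemidef) : hA.sqrt * hA.sqrt = A := by
  have hA0 : (0 : Matrix n n ℂ) ≤ A := hA.nonneg
  rw [hA.sqrt_eq_cfcSqrt]
  exact CFC.sqrt_mul_sqrt_self A

open scoped MatrixOrder in
lemma Matrix.PosSemidef.posSemidef_sqrt {n : Type*} [Fintype n] [DecidableEq n]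
    {A : Matrix n n ℂ} (hA : A.PosSemidef) : hA.sqrt.PosSemidef := by
  rw [hA.sqrt_eq_cfcSqrt]
  exact Matrix.nonneg_iff_posSemidef.mp (CFC.sqrt_nonneg A)

open scoped MatrixOrder in
lemma Matrix.PosSemidef.eq_sqrt_of_sq_eq {n : Type*} [Fintype n] [DecidableEq n]
    {A : Matrix n n ℂ} (hA : A.PosSemidef) (B : Matrix n n ℂ) {hB : B.PosSemidef}
    (hAB : A ^ 2 = B) : A = hB.sqrt := by
  have hA0 : (0 : Matrix n n ℂ) ≤ A := hA.nonneg
  rw [hB.sqrt_eq_cfcSqrt]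
  exact (CFC.sqrt_unique (by rw [← hAB, sq])).symm

lemma Matrix.IsHermitian.star_mul_self_mul_eq_diagonal {n : Type*} [Fintype n] [DecidableEq n]
    {A : Matrix n n ℂ} (hA : A.IsHermitian) :
    star (hA.eigenvectorUnitary : Matrix n n ℂ) * A * (hA.eigenvectorUnitary : Matrix n n ℂ)
      = Matrix.diagonal (RCLike.ofReal ∘ hA.eigenvalues) := by
  have := hA.conjStarAlgAut_star_eigenvectorUnitary
  rw [Unitary.conjStarAlgAut_star_apply] at this
  exact this

namespace QHG

variable {n : Type*} [Fintype n] [DecidableEq n]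

/-- Columns of the eigenvector unitary of a Hermitian matrix. -/
noncomputable def w {X : Matrix n n ℂ} (hX : X.IsHermitian) (i : n) : n → ℂ :=
  fun j => (hX.eigenvectorUnitary : Matrix n n ℂ) j i

lemma quadform {X : Matrix n n ℂ} (hX : X.IsHermitian) (A : Matrix n n ℂ) (i : n) :
    (star (hX.eigenvectorUnitary : Matrix n n ℂ) * A *
      (hX.eigenvectorUnitary : Matrix n n ℂ)) i i
      = dotProduct (star (w hX i)) (A *ᵥ (w hX i)) := by
  simp only [Matrix.mul_apply, dotProduct, Matrix.mulVec, Matrix.star_eq_conjTranspose,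
    Matrix.conjTranspose_apply, w, Pi.star_apply, Finset.sum_mul, Finset.mul_sum]
  rw [Finset.sum_comm]
  apply Finset.sum_congr rfl; intro k _
  apply Finset.sum_congr rfl; intro j _
  ring

lemma trace_eq_sum_quad {X : Matrix n n ℂ} (hX : X.IsHermitian) (A : Matrix n n ℂ) :
    A.trace = ∑ i, dotProduct (star (w hX i)) (A *ᵥ (w hX i)) := by
  have hU : (hX.eigenvectorUnitary : Matrix n n ℂ) *
      star (hX.eigenvectorUnitary : Matrix n n ℂ) = 1 := Unitary.coe_mul_star_self _
  calc A.trace = (star (hX.eigenvectorUnitary : Matrix n n ℂ) * A *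
      (hX.eigenvectorUnitary : Matrix n n ℂ)).trace := by
        rw [Matrix.trace_mul_cycle, hU, one_mul]
    _ = ∑ i, dotProduct (star (w hX i)) (A *ᵥ (w hX i)) := by
        rw [Matrix.trace]
        exact Finset.sum_congr rfl fun i _ => by rw [← quadform hX A i]; rfl

lemma quad_eig {X : Matrix n n ℂ} (hX : X.IsHermitian) (i : n) :
    dotProduct (star (w hX i)) (X *ᵥ (w hX i)) = (hX.eigenvalues i : ℂ) := by
  rw [← quadform hX X i, hX.star_mul_self_mul_eq_diagonal]
  simp

lemma quad_one {X : Matrix n n ℂ} (hX : X.IsHermitian) (i : n) :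
    dotProduct (star (w hX i)) ((1 : Matrix n n ℂ) *ᵥ (w hX i)) = 1 := by
  rw [← quadform hX 1 i]
  have hU : star (hX.eigenvectorUnitary : Matrix n n ℂ) *
      (hX.eigenvectorUnitary : Matrix n n ℂ) = 1 := Unitary.coe_star_mul_self _
  rw [mul_one, hU]
  simp

lemma sandwich {U : Matrix n n ℂ} (A B : Matrix n n ℂ) (hUU : star U * U = 1) :
    (U * A * star U) * (U * B * star U) = U * (A * B) * star U := by
  simp only [Matrix.mul_assoc]
  rw [← Matrix.mul_assoc (star U) U (B * star U), hUU, Matrix.one_mul]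

lemma abs_diag_sq (f : n → ℝ) :
    Matrix.diagonal (fun i => ((|f i| : ℝ) : ℂ)) * Matrix.diagonal (fun i => ((|f i| : ℝ) : ℂ))
      = Matrix.diagonal (fun i => ((f i : ℝ) : ℂ)) * Matrix.diagonal (fun i => ((f i : ℝ) : ℂ)) := by
  rw [Matrix.diagonal_mul_diagonal, Matrix.diagonal_mul_diagonal]
  exact congrArg _ (funext fun i => by
    rw [← Complex.ofReal_mul, ← Complex.ofReal_mul, abs_mul_abs_self])

lemma traceNorm_hermitian {X : Matrix n n ℂ} (hX : X.IsHermitian) :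
    traceNorm X = ∑ i, |hX.eigenvalues i| := by
  set U : Matrix n n ℂ := (hX.eigenvectorUnitary : Matrix n n ℂ) with hUdef
  have hUU : star U * U = 1 := Unitary.coe_star_mul_self _
  set D : Matrix n n ℂ := Matrix.diagonal (fun i => ((|hX.eigenvalues i| : ℝ) : ℂ)) with hDdef
  set B : Matrix n n ℂ := U * D * star U with hBdef
  have hDpsd : D.PosSemidef := Matrix.PosSemidef.diagonal fun i => by
    simpa using Complex.zero_le_real.2 (abs_nonneg (hX.eigenvalues i))
  have hBpsd : B.PosSemidef := by
    have := hDpsd.mul_mul_conjTranspose_same U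
    simpa [Matrix.star_eq_conjTranspose, hBdef] using this
  have hspec := hX.spectral_theorem
  simp only [Unitary.conjStarAlgAut_apply] at hspec
  have hB2 : B ^ 2 = Xᴴ * X := by
    rw [hX.eq, sq, hBdef, sandwich _ _ hUU, abs_diag_sq]
    conv_rhs => rw [hspec]
    rw [sandwich _ _ hUU]
    rfl
  have hsqrt : B = (Matrix.posSemidef_conjTranspose_mul_self X).sqrt :=
    hBpsd.eq_sqrt_of_sq_eq _ hB2
  rw [traceNorm, ← hsqrt, hBdef, Matrix.trace_mul_cycle, hUU, one_mul, Matrix.trace_diagonal]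
  rw [Complex.re_sum]
  exact Finset.sum_congr rfl fun i _ => Complex.ofReal_re _

lemma frob_eq_sum_sq_eig {X : Matrix n n ℂ} (hX : X.IsHermitian) :
    ((Xᴴ * X).trace).re = ∑ i, (hX.eigenvalues i) ^ 2 := by
  set U : Matrix n n ℂ := (hX.eigenvectorUnitary : Matrix n n ℂ) with hUdef
  have hUU : star U * U = 1 := Unitary.coe_star_mul_self _
  have h1 : Xᴴ * X = U * (Matrix.diagonal (RCLike.ofReal ∘ hX.eigenvalues) *
      Matrix.diagonal (RCLike.ofReal ∘ hX.eigenvalues)) * star U := by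
    rw [hX.eq]
    conv_lhs => rw [hX.spectral_theorem, Unitary.conjStarAlgAut_apply]
    rw [sandwich _ _ hUU]
  rw [h1, Matrix.trace_mul_cycle, hUU, one_mul, Matrix.diagonal_mul_diagonal,
    Matrix.trace_diagonal, Complex.re_sum]
  exact Finset.sum_congr rfl fun i _ => by
    simp [Function.comp, ← Complex.ofReal_mul, sq]

lemma psd_trace_re_nonneg {M : Matrix n n ℂ} (hM : M.PosSemidef) : 0 ≤ M.trace.re := by
  rw [trace_eq_sum_quad hM.1 M, Complex.re_sum]
  refine Finset.sum_nonneg fun i _ => ?_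
  have := hM.dotProduct_mulVec_nonneg (w hM.1 i)
  rw [Complex.le_def] at this
  simpa using this.1

lemma psd_mul_trace_re_nonneg {A B : Matrix n n ℂ} (hA : A.PosSemidef) (hB : B.PosSemidef) :
    0 ≤ ((A * B).trace).re := by
  have hs := hA.sqrt_mul_self
  have h1 : A * B = hA.sqrt * (hA.sqrt * B) := by rw [← Matrix.mul_assoc, hs]
  rw [h1, Matrix.trace_mul_comm]
  have hpsd : (hA.sqrt * B * hA.sqrt).PosSemidef := by
    have := hB.conjTranspose_mul_mul_same hA.sqrt
    rwa [hA.posSemidef_sqrt.1.eq] at this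
  exact psd_trace_re_nonneg hpsd

lemma eig_le {X : Matrix n n ℂ} (hX : X.IsHermitian) {η : ℝ}
    (h : ((η : ℂ) • 1 - X).PosSemidef) (i : n) : hX.eigenvalues i ≤ η := by
  have h2 := h.dotProduct_mulVec_nonneg (w hX i)
  rw [Matrix.sub_mulVec, dotProduct_sub, Matrix.smul_mulVec,
    dotProduct_smul, quad_one hX i, quad_eig hX i] at h2
  rw [Complex.le_def] at h2
  simp only [Complex.zero_re, Complex.sub_re, smul_eq_mul, mul_one] at h2
  have := h2.1
  simpa using this

lemma psd_smul {M : Matrix n n ℂ} (hM : M.PosSemidef) {c : ℝ} (hc : 0 ≤ c) :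
    ((c : ℂ) • M).PosSemidef := by
  refine Matrix.PosSemidef.of_dotProduct_mulVec_nonneg ?_ ?_
  · rw [Matrix.IsHermitian, Matrix.conjTranspose_smul, hM.1.eq]
    congr 1
    simp
  · intro x
    rw [Matrix.smul_mulVec, dotProduct_smul, smul_eq_mul]
    exact mul_nonneg (Complex.zero_le_real.2 hc) (hM.dotProduct_mulVec_nonneg x)

lemma isHermitian_real_smul {M : Matrix n n ℂ} (hM : M.IsHermitian) (c : ℝ) :
    ((c : ℂ) • M).IsHermitian := by
  rw [Matrix.IsHermitian, Matrix.conjTranspose_smul, hM.eq]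
  congr 1
  simp

noncomputable def innR (A B : Matrix n n ℂ) : ℝ := ((Aᴴ * B).trace).re

lemma innR_symm (A B : Matrix n n ℂ) : innR A B = innR B A := by
  have h : (Aᴴ * B)ᴴ = Bᴴ * A := by
    rw [Matrix.conjTranspose_mul, Matrix.conjTranspose_conjTranspose]
  have := Matrix.trace_conjTranspose (Aᴴ * B)
  rw [h] at this
  rw [innR, innR, this]
  simp [Complex.star_def]

lemma innR_add_right (A B C : Matrix n n ℂ) : innR A (B + C) = innR A B + innR A C := by
  simp [innR, Matrix.mul_add]

lemma innR_add_left (A B C : Matrix n n ℂ) : innR (A + B) C = innR A C + innR B C := by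
  simp [innR, Matrix.add_mul]

lemma innR_smul_right (A B : Matrix n n ℂ) (c : ℝ) :
    innR A ((c : ℂ) • B) = c * innR A B := by
  simp [innR, Matrix.mul_smul, Complex.re_ofReal_mul]

lemma innR_smul_left (A B : Matrix n n ℂ) (c : ℝ) :
    innR ((c : ℂ) • A) B = c * innR A B := by
  have h : ((c : ℂ) • A)ᴴ = (c : ℂ) • Aᴴ := by
    rw [Matrix.conjTranspose_smul]
    congr 1
    simp
  simp [innR, h, Matrix.smul_mul, Complex.re_ofReal_mul]

lemma innR_zero_right (A : Matrix n n ℂ) : innR A 0 = 0 := by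
  simp [innR]

lemma innR_neg_right (A B : Matrix n n ℂ) : innR A (-B) = -innR A B := by
  simp [innR, Matrix.mul_neg]

lemma innR_neg_neg (A : Matrix n n ℂ) : innR (-A) (-A) = innR A A := by
  simp [innR, Matrix.mul_neg, Matrix.neg_mul]

lemma innR_nonneg_self (A : Matrix n n ℂ) : 0 ≤ innR A A :=
  psd_trace_re_nonneg (Matrix.posSemidef_conjTranspose_mul_self A)

lemma innR_sum_right {ι : Type*} (s : Finset ι) (A : Matrix n n ℂ) (f : ι → Matrix n n ℂ) :
    innR A (∑ i ∈ s, f i) = ∑ i ∈ s, innR A (f i) := by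
  simp [innR, Matrix.mul_sum, Complex.re_sum]

lemma innR_expand (A B : Matrix n n ℂ) :
    innR (A + B) (A + B) = innR A A + 2 * innR A B + innR B B := by
  rw [innR_add_left, innR_add_right, innR_add_right, innR_symm B A]; ring

lemma maurey {ι : Type*} [Fintype ι] (P : ι → ℝ) (hP0 : ∀ i, 0 ≤ P i)
    (hP1 : ∑ i, P i = 1) (v : ι → Matrix n n ℂ)
    (hv : ∑ i, (P i : ℂ) • v i = 0) (R : ℝ) (hR : ∀ i, innR (v i) (v i) ≤ R) :
    ∀ L : ℕ, ∃ sel : Fin L → ι,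
      innR (∑ i, v (sel i)) (∑ i, v (sel i)) ≤ L * R := by
  intro L
  induction L with
  | zero =>
    refine ⟨Fin.elim0, ?_⟩
    simp [innR_zero_right]
  | succ L ih =>
    obtain ⟨sel, hsel⟩ := ih
    set S : Matrix n n ℂ := ∑ i, v (sel i) with hS
    have hexists : ∃ j, innR S (v j) ≤ 0 := by
      by_contra hcon
      push_neg at hcon
      have hsum0 : ∑ j, P j * innR S (v j) = 0 := by
        have : ∀ j, P j * innR S (v j) = innR S ((P j : ℂ) • v j) := fun j =>
          (innR_smul_right S (v j) (P j)).symm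
        rw [Finset.sum_congr rfl fun j _ => this j, ← innR_sum_right, hv, innR_zero_right]
      have hj0 : ∃ j, 0 < P j := by
        by_contra hno
        push_neg at hno
        have : ∑ j, P j = 0 :=
          Finset.sum_eq_zero fun j _ => le_antisymm (hno j) (hP0 j)
        rw [hP1] at this; norm_num at this
      obtain ⟨j0, hj0⟩ := hj0
      have hpos : 0 < ∑ j, P j * innR S (v j) := by
        refine Finset.sum_pos' (fun j _ => mul_nonneg (hP0 j) (hcon j).le) ?_
        exact ⟨j0, Finset.mem_univ j0, mul_pos hj0 (hcon j0)⟩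
      rw [hsum0] at hpos; exact lt_irrefl 0 hpos
    obtain ⟨j, hj⟩ := hexists
    refine ⟨(Fin.cons j sel : Fin (L + 1) → ι), ?_⟩
    have hsum : ∑ i : Fin (L + 1), v ((Fin.cons j sel : Fin (L + 1) → ι) i) = v j + S := by
      rw [Fin.sum_univ_succ]
      simp [hS]
    rw [hsum, innR_expand]
    have h2 : innR (v j) S ≤ 0 := by rw [innR_symm]; exact hj
    have := hR j
    push_cast
    nlinarith [hsel]

lemma trace_re_eq_sum_eig {X : Matrix n n ℂ} (hX : X.IsHermitian) :
    X.trace.re = ∑ i, hX.eigenvalues i := by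
  rw [trace_eq_sum_quad hX X]
  rw [Finset.sum_congr rfl fun i _ => quad_eig hX i, Complex.re_sum]
  exact Finset.sum_congr rfl fun i _ => Complex.ofReal_re _

lemma frob_le_eta_trace {E : Matrix n n ℂ} (hE : E.PosSemidef) {η : ℝ}
    (hη : ((η : ℂ) • 1 - E).PosSemidef) : innR E E ≤ η * E.trace.re := by
  rw [innR, frob_eq_sum_sq_eig hE.1, trace_re_eq_sum_eig hE.1, Finset.mul_sum]
  refine Finset.sum_le_sum fun i _ => ?_
  have h0 := hE.eigenvalues_nonneg i
  have h1 := eig_le hE.1 hη i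
  nlinarith

lemma re_quad_nonneg {M : Matrix n n ℂ} (hM : M.PosSemidef) (x : n → ℂ) :
    0 ≤ (dotProduct (star x) (M *ᵥ x)).re := by
  have := hM.dotProduct_mulVec_nonneg x
  rw [Complex.le_def] at this
  simpa using this.1

lemma traceNorm_sub_le_traces {A B : Matrix n n ℂ} (hA : A.PosSemidef) (hB : B.PosSemidef) :
    traceNorm (A - B) ≤ A.trace.re + B.trace.re := by
  have hX : (A - B).IsHermitian := hA.1.sub hB.1
  rw [traceNorm_hermitian hX]
  have key : ∀ i, |hX.eigenvalues i| ≤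
      (dotProduct (star (w hX i)) (A *ᵥ (w hX i))).re +
      (dotProduct (star (w hX i)) (B *ᵥ (w hX i))).re := by
    intro i
    have h1 := quad_eig hX i
    rw [Matrix.sub_mulVec, dotProduct_sub] at h1
    have h2 : hX.eigenvalues i = (dotProduct (star (w hX i)) (A *ᵥ (w hX i))).re -
        (dotProduct (star (w hX i)) (B *ᵥ (w hX i))).re := by
      have := congrArg Complex.re h1
      simpa using this.symm
    rw [h2]
    have ha := re_quad_nonneg hA (w hX i)
    have hb := re_quad_nonneg hB (w hX i)
    rw [abs_sub_comm]
    calc |_ - _| ≤ |(dotProduct (star (w hX i)) (B *ᵥ (w hX i))).re| +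
        |(dotProduct (star (w hX i)) (A *ᵥ (w hX i))).re| := abs_sub _ _
      _ = _ := by rw [abs_of_nonneg ha, abs_of_nonneg hb]; ring
  calc ∑ i, |hX.eigenvalues i| ≤
      ∑ i, ((dotProduct (star (w hX i)) (A *ᵥ (w hX i))).re +
        (dotProduct (star (w hX i)) (B *ᵥ (w hX i))).re) :=
        Finset.sum_le_sum fun i _ => key i
    _ = A.trace.re + B.trace.re := by
        rw [Finset.sum_add_distrib, trace_eq_sum_quad hX A, trace_eq_sum_quad hX B,
          Complex.re_sum, Complex.re_sum]

lemma traceNorm_le_sqrt_frob {X : Matrix n n ℂ} (hX : X.IsHermitian) :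
    traceNorm X ≤ Real.sqrt ((Fintype.card n) * innR X X) := by
  have h1 : traceNorm X = ∑ i, |hX.eigenvalues i| := traceNorm_hermitian hX
  have h2 : innR X X = ∑ i, (hX.eigenvalues i) ^ 2 := frob_eq_sum_sq_eig hX
  have hnn : 0 ≤ traceNorm X := by
    rw [h1]; exact Finset.sum_nonneg fun i _ => abs_nonneg _
  rw [← Real.sqrt_sq hnn]
  apply Real.sqrt_le_sqrt
  rw [h1, h2]
  calc (∑ i, |hX.eigenvalues i|) ^ 2 = (∑ i, 1 * |hX.eigenvalues i|) ^ 2 := by simp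
    _ ≤ (∑ _i : n, (1:ℝ) ^ 2) * ∑ i, |hX.eigenvalues i| ^ 2 :=
        Finset.sum_mul_sq_le_sq_mul_sq _ _ _
    _ = (Fintype.card n) * ∑ i, (hX.eigenvalues i) ^ 2 := by
        simp [sq_abs, Finset.card_univ]

end QHG

set_option maxHeartbeats 1600000 in
theorem stmt9 {d : ℕ} (hd : 0 < d) {ι : Type*} [Fintype ι] [Nonempty ι]
    (Ed : ι → Matrix (Fin d) (Fin d) ℂ) (η q : ℝ) (hq : q ≤ 1)
    (hE : ∀ i, (Ed i).PosSemidef ∧ (1 - Ed i).PosSemidef ∧ ((η:ℂ) • 1 - Ed i).PosSemidef)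
    (htr : ∀ i, (Ed i).trace = (q : ℂ))
    (P : ι → ℝ) (hP : IsProbDist P)
    (ρ : Matrix (Fin d) (Fin d) ℂ) (hρ : ρ = ∑ i, (P i : ℂ) • Ed i)
    (ε τ : ℝ) (hε : 0 < ε) (hτ : 0 < τ) :
    ∃ (L : ℕ) (sel : Fin L → ι), 0 < L ∧
      (L:ℝ) ≤ 1 + η * d * (2 * Real.log 2 * Real.logb 2 (2 * d)) / (ε^2 * τ) ∧
      traceNorm (ρ - (L:ℂ)⁻¹ • ∑ i, Ed (sel i)) ≤ (ε + τ) + Real.sqrt (8 * (ε + τ)) := by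
  classical
  obtain ⟨hP0, hP1⟩ := hP
  have i₀ : ι := Classical.arbitrary ι
  have hfin : Nonempty (Fin d) := ⟨⟨0, hd⟩⟩
  -- basic positivity facts
  have hq0 : 0 ≤ q := by
    have := QHG.psd_trace_re_nonneg (hE i₀).1
    rwa [htr i₀, Complex.ofReal_re] at this
  have htrre : ∀ i, (Ed i).trace.re = q := fun i => by rw [htr i, Complex.ofReal_re]
  have hη0 : 0 ≤ η := by
    obtain ⟨k⟩ := hfin
    have h0 := (hE i₀).1.eigenvalues_nonneg k
    have h1 := QHG.eig_le (hE i₀).1.1 (hE i₀).2.2 k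
    linarith
  -- ρ facts
  have hρpsd : ρ.PosSemidef := by
    rw [hρ]
    have : ∀ i ∈ Finset.univ, ((P i : ℂ) • Ed i).PosSemidef :=
      fun i _ => QHG.psd_smul (hE i).1 (hP0 i)
    classical
    refine Finset.sum_induction _ _ (fun a b ha hb => ha.add hb) Matrix.PosSemidef.zero this
  have hsumC : (∑ i, (P i : ℂ)) = 1 := by
    have := congrArg (fun r : ℝ => (r : ℂ)) hP1
    push_cast at this
    simpa using this
  have hρtr : ρ.trace.re = q := by
    rw [hρ, Matrix.trace_sum]
    have : ∀ i, ((P i : ℂ) • Ed i).trace = (P i : ℂ) * (q : ℂ) := fun i => by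
      rw [Matrix.trace_smul, htr i, smul_eq_mul]
    rw [Finset.sum_congr rfl fun i _ => this i, ← Finset.sum_mul, hsumC, one_mul,
      Complex.ofReal_re]
  have hρη : ((η : ℂ) • 1 - ρ).PosSemidef := by
    have hid : (η : ℂ) • (1 : Matrix (Fin d) (Fin d) ℂ) - ρ
        = ∑ i, (P i : ℂ) • ((η : ℂ) • 1 - Ed i) := by
      rw [hρ]
      rw [Finset.sum_congr rfl fun i _ => smul_sub ((P i : ℂ)) ((η : ℂ) • 1) (Ed i)]
      rw [Finset.sum_sub_distrib, ← Finset.sum_smul, hsumC, one_smul]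
    rw [hid]
    have : ∀ i ∈ Finset.univ, ((P i : ℂ) • ((η : ℂ) • 1 - Ed i)).PosSemidef :=
      fun i _ => QHG.psd_smul (hE i).2.2 (hP0 i)
    exact Finset.sum_induction _ _ (fun a b ha hb => ha.add hb) Matrix.PosSemidef.zero this
  have hρherm : ρ.IsHermitian := hρpsd.1
  -- Frobenius bounds
  have hfrobE : ∀ i, QHG.innR (Ed i) (Ed i) ≤ η * q := fun i => by
    have := QHG.frob_le_eta_trace (hE i).1 (hE i).2.2
    rwa [htrre i] at this
  have hfrobρ : QHG.innR ρ ρ ≤ η * q := by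
    have := QHG.frob_le_eta_trace hρpsd hρη
    rwa [hρtr] at this
  set v : ι → Matrix (Fin d) (Fin d) ℂ := fun i => Ed i - ρ with hv
  have hvherm : ∀ i, (v i).IsHermitian := fun i => (hE i).1.1.sub hρherm
  have hvsum : ∑ i, (P i : ℂ) • v i = 0 := by
    rw [hv]
    simp only [smul_sub]
    rw [Finset.sum_sub_distrib, ← hρ, ← Finset.sum_smul, hsumC, one_smul, sub_self]
  have hvfrob : ∀ i, QHG.innR (v i) (v i) ≤ 2 * η := by
    intro i
    have hEρ : 0 ≤ QHG.innR (Ed i) ρ := by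
      have h1 : (Ed i)ᴴ = Ed i := (hE i).1.1.eq
      have := QHG.psd_mul_trace_re_nonneg (hE i).1 hρpsd
      rw [QHG.innR, h1]
      exact this
    have hvi : v i = Ed i + (-ρ) := sub_eq_add_neg _ _
    have hexp : QHG.innR (v i) (v i)
        = QHG.innR (Ed i) (Ed i) + 2 * QHG.innR (Ed i) (-ρ) + QHG.innR (-ρ) (-ρ) := by
      rw [hvi, QHG.innR_expand]
    rw [hexp, QHG.innR_neg_right, QHG.innR_neg_neg]
    have h1 := hfrobE i
    have h2 := hfrobρ
    nlinarith [mul_le_mul_of_nonneg_left hq hη0]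
  -- the constant K
  set K : ℝ := 2 * Real.log 2 * Real.logb 2 (2 * d) with hK
  have hlog2 : (0.6931471803 : ℝ) < Real.log 2 := Real.log_two_gt_d9
  have hlogb1 : 1 ≤ Real.logb 2 (2 * d) := by
    rw [Real.logb, le_div_iff₀ (by linarith)]
    rw [one_mul]
    apply Real.log_le_log (by norm_num)
    have : (1 : ℝ) ≤ d := by exact_mod_cast hd
    linarith
  have hK2 : 1 ≤ K := by nlinarith
  have hεττ : 0 < ε + τ := by linarith
  by_cases hcase : (1:ℝ)/2 ≤ ε + τ
  · -- trivial case : L = 1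
    refine ⟨1, fun _ => i₀, Nat.one_pos, ?_, ?_⟩
    · have hnn : 0 ≤ η * d * K / (ε ^ 2 * τ) := by
        apply div_nonneg
        · exact mul_nonneg (mul_nonneg hη0 (Nat.cast_nonneg d)) (by linarith)
        · positivity
      push_cast
      linarith
    · have hmat : ρ - ((1:ℕ):ℂ)⁻¹ • ∑ i : Fin 1, Ed i₀ = ρ - Ed i₀ := by
        simp
      rw [show ((1:ℕ):ℂ)⁻¹ • ∑ _i : Fin 1, Ed i₀ = Ed i₀ by simp]
      have hb := QHG.traceNorm_sub_le_traces hρpsd (hE i₀).1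
      rw [hρtr, htrre i₀] at hb
      have h2 : (2:ℝ) ≤ Real.sqrt (8 * (ε + τ)) := by
        rw [show (2:ℝ) = Real.sqrt 4 by
          rw [show (4:ℝ) = 2 ^ 2 by norm_num, Real.sqrt_sq (by norm_num)]]
        apply Real.sqrt_le_sqrt
        linarith
      calc traceNorm (ρ - Ed i₀) ≤ q + q := hb
        _ ≤ 2 := by linarith
        _ ≤ (ε + τ) + Real.sqrt (8 * (ε + τ)) := by linarith
  · -- main case : ε + τ < 1/2
    push_neg at hcase
    set x : ℝ := η * d / (2 * (ε + τ)) with hx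
    have hx0 : 0 ≤ x := by
      apply div_nonneg
      · have : (0:ℝ) ≤ d := Nat.cast_nonneg d
        nlinarith
      · linarith
    set L : ℕ := max 1 ⌈x⌉₊ with hL
    have hL1 : 1 ≤ L := le_max_left _ _
    have hLpos : 0 < L := hL1
    have hLx : x ≤ (L : ℝ) := by
      calc x ≤ (⌈x⌉₊ : ℝ) := Nat.le_ceil x
        _ ≤ (L : ℝ) := by exact_mod_cast Nat.cast_le.2 (le_max_right _ _)
    have hLub : (L : ℝ) ≤ 1 + x := by
      have h1 : (⌈x⌉₊ : ℝ) < x + 1 := Nat.ceil_lt_add_one hx0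
      have h2 : ((max 1 ⌈x⌉₊ : ℕ) : ℝ) = max 1 (⌈x⌉₊ : ℝ) := by
        push_cast [Nat.cast_max]; ring_nf
      rw [hL, h2]
      apply max_le <;> linarith
    obtain ⟨sel, hsel⟩ := QHG.maurey P hP0 hP1 v hvsum (2 * η) hvfrob L
    refine ⟨L, sel, hLpos, ?_, ?_⟩
    · -- size bound
      have hxK : x ≤ η * d * K / (ε ^ 2 * τ) := by
        rw [hx, div_le_div_iff₀ (by linarith) (by positivity)]
        have hd0 : (0:ℝ) ≤ (d:ℝ) := Nat.cast_nonneg d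
        have hηd : (0:ℝ) ≤ η * d := by nlinarith
        have hkey : ε ^ 2 * τ ≤ K * (2 * (ε + τ)) := by
          have hε2 : ε ^ 2 ≤ 1 := by nlinarith
          have h1 : ε ^ 2 * τ ≤ τ := by nlinarith
          have h3 : 2 * (ε + τ) ≤ K * (2 * (ε + τ)) :=
            le_mul_of_one_le_left (by linarith) hK2
          linarith
        calc η * d * (ε ^ 2 * τ) ≤ η * d * (K * (2 * (ε + τ))) := by
              exact mul_le_mul_of_nonneg_left hkey hηd
          _ = η * d * K * (2 * (ε + τ)) := by ring
      linarith
    · -- error bound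
      set S : Matrix (Fin d) (Fin d) ℂ := ∑ i, v (sel i) with hS
      have hLC : ((L:ℕ) : ℂ) ≠ 0 := by
        exact_mod_cast Nat.cast_ne_zero.2 (Nat.pos_iff_ne_zero.1 hLpos)
      have hmat : ρ - (L:ℂ)⁻¹ • ∑ i, Ed (sel i) = ((-( (L:ℝ)⁻¹ ) : ℝ) : ℂ) • S := by
        rw [hS, hv]
        rw [Finset.sum_sub_distrib]
        rw [Finset.sum_const, Finset.card_univ, Fintype.card_fin]
        rw [smul_sub]
        push_cast
        rw [← Nat.cast_smul_eq_nsmul ℂ L ρ]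
        rw [smul_smul]
        rw [neg_mul, inv_mul_cancel₀ hLC, neg_smul, neg_smul, one_smul]
        abel
      have hSherm : S.IsHermitian := by
        rw [hS, Matrix.IsHermitian, Matrix.conjTranspose_sum]
        exact Finset.sum_congr rfl fun i _ => (hvherm (sel i)).eq
      have hYherm : (ρ - (L:ℂ)⁻¹ • ∑ i, Ed (sel i)).IsHermitian := by
        rw [hmat]
        exact QHG.isHermitian_real_smul hSherm _
      have hfrobY : QHG.innR (ρ - (L:ℂ)⁻¹ • ∑ i, Ed (sel i))
          (ρ - (L:ℂ)⁻¹ • ∑ i, Ed (sel i)) ≤ 2 * η / L := by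
        rw [hmat, QHG.innR_smul_left, QHG.innR_smul_right]
        have hSS : QHG.innR S S ≤ L * (2 * η) := hsel
        have hSS0 : 0 ≤ QHG.innR S S := QHG.innR_nonneg_self S
        have hLr : (0:ℝ) < (L:ℝ) := by exact_mod_cast hLpos
        rw [show -(L:ℝ)⁻¹ * (-(L:ℝ)⁻¹ * QHG.innR S S) = (L:ℝ)⁻¹ * (L:ℝ)⁻¹ * QHG.innR S S
          by ring]
        rw [div_eq_mul_inv]
        calc (L:ℝ)⁻¹ * (L:ℝ)⁻¹ * QHG.innR S S ≤ (L:ℝ)⁻¹ * (L:ℝ)⁻¹ * ((L:ℝ) * (2 * η)) := by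
              apply mul_le_mul_of_nonneg_left hSS (by positivity)
          _ = 2 * η * (L:ℝ)⁻¹ * ((L:ℝ) * (L:ℝ)⁻¹) := by ring
          _ = 2 * η * (L:ℝ)⁻¹ := by rw [mul_inv_cancel₀ (ne_of_gt hLr), mul_one]
      have hbound := QHG.traceNorm_le_sqrt_frob hYherm
      have hcard : (Fintype.card (Fin d) : ℝ) = (d : ℝ) := by simp
      have hfinal : Real.sqrt ((Fintype.card (Fin d)) *
          QHG.innR (ρ - (L:ℂ)⁻¹ • ∑ i, Ed (sel i)) (ρ - (L:ℂ)⁻¹ • ∑ i, Ed (sel i)))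
          ≤ Real.sqrt (8 * (ε + τ)) := by
        apply Real.sqrt_le_sqrt
        rw [hcard]
        have hLr : (0:ℝ) < (L:ℝ) := by exact_mod_cast hLpos
        have h1 : (d:ℝ) * (2 * η / L) ≤ 8 * (ε + τ) := by
          have h2 : η * d ≤ 2 * (ε + τ) * (L:ℝ) := by
            have := hLx
            rw [hx, div_le_iff₀ (by linarith : (0:ℝ) < 2 * (ε + τ))] at this
            nlinarith
          rw [← mul_div_assoc, div_le_iff₀ hLr]
          nlinarith
        have h2 : QHG.innR (ρ - (L:ℂ)⁻¹ • ∑ i, Ed (sel i))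
            (ρ - (L:ℂ)⁻¹ • ∑ i, Ed (sel i)) ≤ 2 * η / L := hfrobY
        have hd0 : (0:ℝ) ≤ (d:ℝ) := Nat.cast_nonneg d
        nlinarith
      calc traceNorm (ρ - (L:ℂ)⁻¹ • ∑ i, Ed (sel i)) ≤ _ := hbound
        _ ≤ Real.sqrt (8 * (ε + τ)) := hfinal
        _ ≤ (ε + τ) + Real.sqrt (8 * (ε + τ)) := by linarith
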